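/- arXiv:1912.03636 — 2 statements merged into one kernel-verified Lean document; each statement's English description precedes it below -/
import Mathlib

section
/- Under the covariate-adaptive randomization with allocation function g_n, if the n-th patient falls in stratum t, then M_n − M_{n−1} = 2Λ_{n−1}(t)(2T_n − 1) + 1, and consequently E[M_n | 𝓕_{n−1}] − M_{n−1} = 1 − 4·Σ_t |Λ_{n−1}(t)|·|1/2 − g_n(4Λ_{n−1}(t))|·p(t), provided g_n(x) ≤ 1/2 ≤ g_n(−x) for x ≥ 0. -/
open Finset MeasureTheory

/-- The set of strata: one level for each of the `I` covariates. -/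
abbrev Strata (I : ℕ) (m : Fin I → ℕ) := (i : Fin I) → Fin (m i)

/-- Marginal sum of a stratum-indexed array over all coordinates except the `i`-th. -/
noncomputable def marg {I : ℕ} {m : Fin I → ℕ} (D : Strata I m → ℝ) (i : Fin I)
    (ti : Fin (m i)) : ℝ :=
  ∑ s ∈ Finset.univ.filter (fun s : Strata I m => s i = ti), D s

/-- Total sum of a stratum-indexed array. -/
noncomputable def tot {I : ℕ} {m : Fin I → ℕ} (D : Strata I m → ℝ) : ℝ := ∑ s, D s

/-- Weighted imbalance `Λ(t) = w_o·D + Σ_i w_{m,i}·D(i;t_i) + w_s·D(t)`. -/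
noncomputable def lam {I : ℕ} {m : Fin I → ℕ} (wo ws : ℝ) (wm : Fin I → ℝ)
    (D : Strata I m → ℝ) (t : Strata I m) : ℝ :=
  wo * tot D + (∑ i, wm i * marg D i (t i)) + ws * D t

/-- The weighted imbalance measure
`M_n = Σ_t w_s D(t)² + Σ_i Σ_{t_i} w_{m,i} D(i;t_i)² + w_o D²`. -/
noncomputable def Mimb {I : ℕ} {m : Fin I → ℕ} (wo ws : ℝ) (wm : Fin I → ℝ)
    (D : Strata I m → ℝ) : ℝ :=
  ws * (∑ t, (D t)^2) + (∑ i, ∑ ti : Fin (m i), wm i * (marg D i ti)^2) + wo * (tot D)^2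


private lemma tot_addX {I : ℕ} {m : Fin I → ℕ} (D : Strata I m → ℝ) (c : ℝ) (t : Strata I m) :
    tot (fun s => D s + c * (if t = s then 1 else 0)) = tot D + c := by
  unfold tot
  rw [Finset.sum_add_distrib]
  congr 1
  simp only [mul_ite, mul_one, mul_zero]
  rw [Finset.sum_ite_eq]
  simp

private lemma marg_addX {I : ℕ} {m : Fin I → ℕ} (D : Strata I m → ℝ) (c : ℝ) (t : Strata I m)
    (i : Fin I) (ti : Fin (m i)) :
    marg (fun s => D s + c * (if t = s then 1 else 0)) i ti
      = marg D i ti + c * (if t i = ti then 1 else 0) := by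
  unfold marg
  rw [Finset.sum_add_distrib]
  congr 1
  simp only [mul_ite, mul_one, mul_zero]
  rw [Finset.sum_ite_eq]
  simp [Finset.mem_filter]

private lemma sq_sum_auxX {α : Type*} [Fintype α] [DecidableEq α] (f : α → ℝ) (w c : ℝ) (b : α) :
    ∑ a, w * (f a + c * (if b = a then 1 else 0))^2
      = (∑ a, w * (f a)^2) + w * (2 * c * f b + c^2) := by
  have h : ∀ a, w * (f a + c * (if b = a then 1 else 0))^2
      = w * (f a)^2 + (if b = a then w * (2 * c * f a + c^2) else 0) := by
    intro a
    by_cases h : b = a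
    · simp only [h, if_true]; ring
    · simp [h]
  simp only [h]
  rw [Finset.sum_add_distrib, Finset.sum_ite_eq]
  simp

private lemma sq_sum_aux1X {α : Type*} [Fintype α] [DecidableEq α] (f : α → ℝ) (c : ℝ) (b : α) :
    ∑ a, (f a + c * (if b = a then 1 else 0))^2
      = (∑ a, (f a)^2) + (2 * c * f b + c^2) := by
  have h := sq_sum_auxX f 1 c b
  simpa using h

private lemma part1X {I : ℕ} {m : Fin I → ℕ} (wo ws : ℝ) (wm : Fin I → ℝ)
    (hsum : wo + ws + ∑ i, wm i = 1) (D : Strata I m → ℝ)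
    (c : ℝ) (hc2 : c^2 = 1) (t : Strata I m) :
    Mimb wo ws wm (fun s => D s + c * (if t = s then 1 else 0)) - Mimb wo ws wm D
      = 2 * lam wo ws wm D t * c + 1 := by
  unfold Mimb
  rw [tot_addX, sq_sum_aux1X D c t]
  simp only [marg_addX, sq_sum_auxX]
  rw [Finset.sum_add_distrib]
  have hsplit : ∑ i, wm i * (2*c*marg D i (t i) + c^2)
      = 2*c*(∑ i, wm i * marg D i (t i)) + c^2 * ∑ i, wm i := by
    rw [Finset.mul_sum, Finset.mul_sum, ← Finset.sum_add_distrib]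
    exact Finset.sum_congr rfl (fun i _ => by ring)
  rw [hsplit]
  unfold lam
  linear_combination (wo + ws + ∑ i, wm i) * hc2 + hsum

/-- One step of the covariate-adaptive randomization: if the new patient falls in
stratum `t`, then `M_n − M_{n−1} = 2Λ_{n−1}(t)(2T_n − 1) + 1`, and, provided
`g(x) ≤ 1/2 ≤ g(−x)` for `x ≥ 0`,
`E[M_n | 𝓕_{n−1}] − M_{n−1} = 1 − 4 Σ_t |Λ_{n−1}(t)|·|1/2 − g(4Λ_{n−1}(t))|·p(t)`. -/
theorem stmt10 {Ω : Type*} [MeasurableSpace Ω] (μ : Measure Ω) [IsProbabilityMeasure μ]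
    (I : ℕ) (m : Fin I → ℕ)
    (wo ws : ℝ) (wm : Fin I → ℝ)
    (hwo : 0 ≤ wo) (hws : 0 ≤ ws) (hwm : ∀ i, 0 ≤ wm i)
    (hsum : wo + ws + ∑ i, wm i = 1)
    (D : Strata I m → ℝ)
    (κ : Ω → Strata I m) (hκ : Measurable κ)
    (T : Ω → ℝ) (hT : Measurable T) (hT01 : ∀ ω, T ω = 0 ∨ T ω = 1)
    (g : ℝ → ℝ) (hg01 : ∀ x, 0 ≤ g x ∧ g x ≤ 1)
    (hg : ∀ x : ℝ, 0 ≤ x → g x ≤ 1/2 ∧ 1/2 ≤ g (-x))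
    (p : Strata I m → ℝ) (hp : ∀ t, (μ (κ ⁻¹' {t})).toReal = p t)
    (hjoint : ∀ t, (μ {ω | T ω = 1 ∧ κ ω = t}).toReal = g (4 * lam wo ws wm D t) * p t) :
    (∀ ω (t : Strata I m), κ ω = t →
      Mimb wo ws wm (fun s => D s + (2 * T ω - 1) * (if κ ω = s then 1 else 0))
          - Mimb wo ws wm D
        = 2 * lam wo ws wm D t * (2 * T ω - 1) + 1) ∧
    (∫ ω, Mimb wo ws wm (fun s => D s + (2 * T ω - 1) * (if κ ω = s then 1 else 0)) ∂μ)
        - Mimb wo ws wm D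
      = 1 - 4 * ∑ t, |lam wo ws wm D t| * |1/2 - g (4 * lam wo ws wm D t)| * p t := by
  classical
  have hc2 : ∀ ω, (2 * T ω - 1)^2 = 1 := by
    intro ω; rcases hT01 ω with h | h <;> rw [h] <;> norm_num
  have part1 : ∀ ω (t : Strata I m), κ ω = t →
      Mimb wo ws wm (fun s => D s + (2 * T ω - 1) * (if κ ω = s then 1 else 0))
          - Mimb wo ws wm D
        = 2 * lam wo ws wm D t * (2 * T ω - 1) + 1 := by
    intro ω t ht
    subst ht
    exact part1X wo ws wm hsum D _ (hc2 ω) (κ ω)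
  refine ⟨part1, ?_⟩
  set L : Strata I m → ℝ := lam wo ws wm D with hLdef
  have hmeasB : ∀ t : Strata I m, MeasurableSet (κ ⁻¹' {t}) :=
    fun t => hκ (measurableSet_singleton t)
  have hmeasA : ∀ t : Strata I m, MeasurableSet {ω | T ω = 1 ∧ κ ω = t} := by
    intro t
    have h : {ω | T ω = 1 ∧ κ ω = t} = T ⁻¹' {1} ∩ κ ⁻¹' {t} := by
      ext ω; simp [Set.mem_preimage, Set.mem_singleton_iff]
    rw [h]
    exact (hT (measurableSet_singleton 1)).inter (hmeasB t)
  -- pointwise rewrite of the integrand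
  have hfun : (fun ω => Mimb wo ws wm
        (fun s => D s + (2 * T ω - 1) * (if κ ω = s then 1 else 0)))
      = fun ω => Mimb wo ws wm D
        + (∑ t, Set.indicator {ω' | T ω' = 1 ∧ κ ω' = t} (fun _ => 4 * L t) ω)
        + (∑ t, Set.indicator (κ ⁻¹' {t}) (fun _ => 1 - 2 * L t) ω) := by
    funext ω
    have h1 := part1 ω (κ ω) rfl
    have hs2 : (∑ t, Set.indicator (κ ⁻¹' {t}) (fun _ => 1 - 2 * L t) ω)
        = 1 - 2 * L (κ ω) := by
      simp [Set.indicator_apply, Set.mem_preimage, Finset.sum_ite_eq]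
    rcases hT01 ω with h | h
    · have hs1 : (∑ t, Set.indicator {ω' | T ω' = 1 ∧ κ ω' = t} (fun _ => 4 * L t) ω)
          = 0 := by
        simp [Set.indicator_apply, Set.mem_setOf_eq, h]
      rw [hs1, hs2]
      rw [h] at h1 ⊢
      linarith [h1]
    · have hs1 : (∑ t, Set.indicator {ω' | T ω' = 1 ∧ κ ω' = t} (fun _ => 4 * L t) ω)
          = 4 * L (κ ω) := by
        simp [Set.indicator_apply, Set.mem_setOf_eq, h, Finset.sum_ite_eq]
      rw [hs1, hs2]
      rw [h] at h1 ⊢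
      linarith [h1]
  -- integrability
  have hintA : ∀ t : Strata I m,
      Integrable (Set.indicator {ω' | T ω' = 1 ∧ κ ω' = t} (fun _ => (4 * L t : ℝ))) μ :=
    fun t => (integrable_const _).indicator (hmeasA t)
  have hintB : ∀ t : Strata I m,
      Integrable (Set.indicator (κ ⁻¹' {t}) (fun _ => (1 - 2 * L t : ℝ))) μ :=
    fun t => (integrable_const _).indicator (hmeasB t)
  have hintSA : Integrable (fun ω => ∑ t, Set.indicator {ω' | T ω' = 1 ∧ κ ω' = t}
      (fun _ => (4 * L t : ℝ)) ω) μ := integrable_finset_sum _ (fun t _ => hintA t)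
  have hintSB : Integrable (fun ω => ∑ t, Set.indicator (κ ⁻¹' {t})
      (fun _ => (1 - 2 * L t : ℝ)) ω) μ := integrable_finset_sum _ (fun t _ => hintB t)
  have hintC : Integrable (fun ω => Mimb wo ws wm D
      + ∑ t, Set.indicator {ω' | T ω' = 1 ∧ κ ω' = t} (fun _ => (4 * L t : ℝ)) ω) μ :=
    (integrable_const _).add hintSA
  -- sum of probabilities is 1
  have hpsum : ∑ t, p t = 1 := by
    have h1 : (∫ ω, (∑ t : Strata I m, Set.indicator (κ ⁻¹' {t}) (fun _ => (1:ℝ)) ω) ∂μ)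
        = 1 := by
      have h2 : (fun ω => ∑ t : Strata I m, Set.indicator (κ ⁻¹' {t}) (fun _ => (1:ℝ)) ω)
          = fun _ => 1 := by
        funext ω
        simp [Set.indicator_apply, Set.mem_preimage, Finset.sum_ite_eq]
      rw [h2]
      simp
    rw [integral_finset_sum _ (fun t _ => (integrable_const _).indicator (hmeasB t))] at h1
    have h3 : ∀ t : Strata I m,
        (∫ ω, Set.indicator (κ ⁻¹' {t}) (fun _ => (1:ℝ)) ω ∂μ) = p t := by
      intro t
      rw [integral_indicator_const _ (hmeasB t), measureReal_def, hp t]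
      simp
    rw [Finset.sum_congr rfl (fun t _ => h3 t)] at h1
    exact h1
  -- compute the integral
  rw [hfun, integral_add hintC hintSB, integral_add (integrable_const _) hintSA,
    integral_const, integral_finset_sum _ (fun t _ => hintA t),
    integral_finset_sum _ (fun t _ => hintB t)]
  simp only [measureReal_def, measure_univ, ENNReal.toReal_one, one_smul]
  have hA : ∀ t : Strata I m,
      (∫ ω, Set.indicator {ω' | T ω' = 1 ∧ κ ω' = t} (fun _ => (4 * L t : ℝ)) ω ∂μ)
        = g (4 * L t) * p t * (4 * L t) := by
    intro t
    rw [integral_indicator_const _ (hmeasA t), measureReal_def, hjoint t]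
    simp [smul_eq_mul]
  have hB : ∀ t : Strata I m,
      (∫ ω, Set.indicator (κ ⁻¹' {t}) (fun _ => (1 - 2 * L t : ℝ)) ω ∂μ)
        = p t * (1 - 2 * L t) := by
    intro t
    rw [integral_indicator_const _ (hmeasB t), measureReal_def, hp t]
    simp [smul_eq_mul]
  rw [Finset.sum_congr rfl (fun t _ => hA t), Finset.sum_congr rfl (fun t _ => hB t)]
  -- the sign identity
  have key : ∀ t : Strata I m, L t * (g (4 * L t) - 1/2) = -(|L t| * |1/2 - g (4 * L t)|) := by
    intro t
    rcases le_or_gt 0 (L t) with h | h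
    · have hg1 : g (4 * L t) ≤ 1/2 := (hg (4 * L t) (by linarith)).1
      rw [abs_of_nonneg h, abs_of_nonneg (by linarith)]
      ring
    · have hx : (0:ℝ) ≤ -(4 * L t) := by linarith
      have hg2 : 1/2 ≤ g (4 * L t) := by
        have h5 := (hg (-(4 * L t)) hx).2
        rwa [neg_neg] at h5
      rw [abs_of_neg h, abs_of_nonpos (by linarith)]
      ring
  have hterm : ∀ t : Strata I m,
      g (4 * L t) * p t * (4 * L t) + p t * (1 - 2 * L t)
        = p t - 4 * (|L t| * |1/2 - g (4 * L t)| * p t) := by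
    intro t
    linear_combination 4 * p t * key t
  have hfinal : (∑ t, g (4 * L t) * p t * (4 * L t)) + ∑ t, p t * (1 - 2 * L t)
      = 1 - 4 * ∑ t, |L t| * |1/2 - g (4 * L t)| * p t := by
    rw [← Finset.sum_add_distrib, Finset.sum_congr rfl (fun t _ => hterm t),
      Finset.sum_sub_distrib, hpsum, ← Finset.mul_sum]
  linarith [hfinal]
end

section
/- Let (M_n) be a nonnegative adapted process with M_0 = 0 and increments satisfying M_n = M_{n−1} + 1 + ξ_n where |ξ_n| ≤ 2√(M_{n−1}) and E[ξ_n | 𝓕_{n−1}] ≤ 0. Then for every positive integer r there is a constant C_r such that E[M_n^{r+1} | 𝓕_{n−1}] − M_{n−1}^{r+1} ≤ C_r (M_{n−1} + 1)^r, and consequently E[M_n^r] ≤ C'_r n^r for all n. -/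
open MeasureTheory Filter

lemma ptwise (r : ℕ) : ∃ D : ℝ, 0 ≤ D ∧ ∀ a x : ℝ, 1 ≤ a → |x| ≤ 2 * Real.sqrt a →
    0 ≤ a + x → (a + x) ^ (r + 1) ≤ a ^ (r + 1) + (r + 1) * a ^ r * x + D * a ^ r := by
  induction r with
  | zero => exact ⟨0, le_refl 0, fun a x _ _ _ => by ring_nf; nlinarith []⟩
  | succ r ih =>
    obtain ⟨D, hD0, hD⟩ := ih
    refine ⟨3 * D + 4 * (r + 1) + 4, by positivity, fun a x ha hx hax => ?_⟩
    have ha0 : (0:ℝ) ≤ a := le_trans zero_le_one ha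
    have hs : Real.sqrt a ≤ a := by
      calc Real.sqrt a ≤ Real.sqrt (a ^ 2) := Real.sqrt_le_sqrt (by nlinarith)
        _ = a := Real.sqrt_sq ha0
    have hx2 : x ^ 2 ≤ 4 * a := by
      nlinarith [sq_abs x, Real.sq_sqrt ha0, sq_nonneg (|x| - 2 * Real.sqrt a),
        Real.sqrt_nonneg a, abs_nonneg x]
    have hxa : x ≤ 2 * a := le_trans (le_abs_self x) (le_trans hx (by linarith))
    have hIH := hD a x ha hx hax
    have key : (a + x) ^ (r + 2) ≤ (a + x) * (a ^ (r + 1) + (r + 1) * a ^ r * x + D * a ^ r) := by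
      calc (a + x) ^ (r + 2) = (a + x) * (a + x) ^ (r + 1) := by ring
        _ ≤ (a + x) * (a ^ (r + 1) + (r + 1) * a ^ r * x + D * a ^ r) :=
          mul_le_mul_of_nonneg_left hIH hax
    refine key.trans ?_
    have hb : (0:ℝ) ≤ a ^ r := pow_nonneg ha0 r
    push_cast
    simp only [pow_succ]
    nlinarith [mul_le_mul_of_nonneg_left hx2 (mul_nonneg (by positivity : (0:ℝ) ≤ (r:ℝ)+1) hb),
      mul_le_mul_of_nonneg_left hxa (mul_nonneg hD0 hb), mul_nonneg ha0 hb,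
      mul_le_mul_of_nonneg_left hxa hb]

lemma succ_pow_le (r : ℕ) : ∀ m : ℝ, 0 ≤ m →
    (m + 1) ^ (r + 1) ≤ m ^ (r + 1) + (r + 1) * (m + 1) ^ r := by
  induction r with
  | zero => intro m _; norm_num
  | succ r ih =>
    intro m hm
    have h := ih m hm
    have h1 : (0:ℝ) ≤ m + 1 := by linarith
    have key : (m + 1) ^ (r + 2) ≤ (m+1) * (m ^ (r + 1) + (r + 1) * (m + 1) ^ r) := by
      calc (m + 1) ^ (r + 2) = (m + 1) * (m + 1) ^ (r + 1) := by ring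
        _ ≤ _ := mul_le_mul_of_nonneg_left h h1
    refine key.trans ?_
    push_cast
    simp only [pow_succ]
    nlinarith [pow_nonneg hm r, pow_nonneg h1 r,
      mul_le_mul_of_nonneg_right (pow_le_pow_left₀ hm (by linarith : m ≤ m + 1) r) hm]

lemma pow_add_one_le (r : ℕ) (m : ℝ) (hm : 0 ≤ m) : (m + 1) ^ r ≤ 2 ^ r * (m ^ r + 1) := by
  have h1 : m + 1 ≤ 2 * max m 1 := by
    rcases le_total m 1 with h | h
    · rw [max_eq_right h]; linarith
    · rw [max_eq_left h]; linarith
  have h2 : (m + 1) ^ r ≤ (2 * max m 1) ^ r := pow_le_pow_left₀ (by linarith) h1 _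
  refine h2.trans ?_
  rw [mul_pow]
  gcongr 2 ^ r * ?_
  rcases le_total m 1 with h | h
  · rw [max_eq_right h, one_pow]; nlinarith [pow_nonneg hm r]
  · rw [max_eq_left h]; linarith

/-- If `M_n = M_{n−1} + 1 + ξ_n` with `|ξ_n| ≤ 2√(M_{n−1})` and `E[ξ_n | 𝓕_{n−1}] ≤ 0`,
then for each integer `r ≥ 1` there is a constant `C_r` with
`E[M_n^{r+1} | 𝓕_{n−1}] − M_{n−1}^{r+1} ≤ C_r (M_{n−1}+1)^r`, and consequently
`E[M_n^r] ≤ C'_r n^r`. -/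
theorem stmt12 {Ω : Type*} {mΩ : MeasurableSpace Ω} (μ : Measure Ω) [IsProbabilityMeasure μ]
    (ℱ : Filtration ℕ mΩ) (M ξ : ℕ → Ω → ℝ)
    (hadapt : ∀ n, StronglyMeasurable[ℱ n] (M n))
    (hξadapt : ∀ n, StronglyMeasurable[ℱ n] (ξ n))
    (hint : ∀ n r : ℕ, Integrable (fun ω => M n ω ^ r) μ)
    (hξint : ∀ n, Integrable (ξ n) μ)
    (hnn : ∀ n ω, 0 ≤ M n ω) (h0 : ∀ ω, M 0 ω = 0)
    (hrec : ∀ n ω, M (n+1) ω = M n ω + 1 + ξ (n+1) ω)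
    (hbd : ∀ n ω, |ξ (n+1) ω| ≤ 2 * Real.sqrt (M n ω))
    (hcond : ∀ n, μ[ξ (n+1) | ℱ n] ≤ᵐ[μ] 0) :
    ∀ r : ℕ, 0 < r →
      (∃ C : ℝ, ∀ n, μ[(fun ω => M (n+1) ω ^ (r+1)) | ℱ n]
          ≤ᵐ[μ] fun ω => M n ω ^ (r+1) + C * (M n ω + 1) ^ r) ∧
      (∃ C' : ℝ, ∀ n : ℕ, ∫ ω, M n ω ^ r ∂μ ≤ C' * (n:ℝ) ^ r) := by
  -- integrability of powers of `M n + 1`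
  have hint1 : ∀ n j : ℕ, Integrable (fun ω => (M n ω + 1) ^ j) μ := by
    intro n j
    have he : (fun ω => (M n ω + 1) ^ j)
        = fun ω => ∑ k ∈ Finset.range (j+1), M n ω ^ k * (j.choose k : ℝ) := by
      funext ω; rw [add_pow]; simp
    rw [he]
    exact integrable_finset_sum _ fun k _ => (hint n k).mul_const _
  have hmeasMa : ∀ n j : ℕ, StronglyMeasurable[ℱ n] (fun ω => (M n ω + 1) ^ j) :=
    fun n j => ((hadapt n).add_const 1).pow j
  have hsq : ∀ n ω, Real.sqrt (M n ω) ≤ M n ω + 1 := by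
    intro n ω
    have h1 : (0:ℝ) ≤ M n ω := hnn n ω
    calc Real.sqrt (M n ω) ≤ Real.sqrt ((M n ω + 1) ^ 2) :=
          Real.sqrt_le_sqrt (by nlinarith)
      _ = M n ω + 1 := Real.sqrt_sq (by linarith)
  have hintprod : ∀ n j : ℕ, Integrable (fun ω => (M n ω + 1) ^ j * ξ (n+1) ω) μ := by
    intro n j
    refine Integrable.mono ((hint1 n (j+1)).const_mul 2) ?_ ?_
    · exact (((hmeasMa n j).mono (ℱ.le n)).mul
        ((hξadapt (n+1)).mono (ℱ.le (n+1)))).aestronglyMeasurable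
    · refine Filter.Eventually.of_forall fun ω => ?_
      have h1 : (0:ℝ) ≤ M n ω := hnn n ω
      have h2 : (0:ℝ) ≤ (M n ω + 1) ^ j := by positivity
      rw [Real.norm_eq_abs, Real.norm_eq_abs, abs_mul, abs_of_nonneg h2]
      have h3 : |ξ (n+1) ω| ≤ 2 * (M n ω + 1) := (hbd n ω).trans (by linarith [hsq n ω])
      have h4 : (M n ω + 1) ^ j * |ξ (n+1) ω| ≤ (M n ω + 1) ^ j * (2 * (M n ω + 1)) :=
        mul_le_mul_of_nonneg_left h3 h2
      calc (M n ω + 1) ^ j * |ξ (n+1) ω| ≤ 2 * (M n ω + 1) ^ (j+1) := by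
            rw [pow_succ]; linarith
        _ ≤ |2 * (M n ω + 1) ^ (j+1)| := le_abs_self _
  -- the drift bound
  have drift : ∀ r : ℕ, ∃ C : ℝ, 0 ≤ C ∧ ∀ n,
      μ[(fun ω => M (n+1) ω ^ (r+1)) | ℱ n]
        ≤ᵐ[μ] fun ω => M n ω ^ (r+1) + C * (M n ω + 1) ^ r := by
    intro r
    obtain ⟨D, hD0, hD⟩ := ptwise r
    refine ⟨D + (r+1), by positivity, fun n => ?_⟩
    set g1 : Ω → ℝ := fun ω => (M n ω + 1) ^ (r+1) + D * (M n ω + 1) ^ r with hg1def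
    set h : Ω → ℝ := fun ω => (M n ω + 1) ^ r * ξ (n+1) ω with hhdef
    have hg1int : Integrable g1 μ := (hint1 n (r+1)).add ((hint1 n r).const_mul D)
    have hhint : Integrable h μ := hintprod n r
    have hsint : Integrable (((r:ℝ)+1) • h) μ := hhint.smul _
    have hptw : ∀ ω, M (n+1) ω ^ (r+1) ≤ (g1 + ((r:ℝ)+1) • h) ω := by
      intro ω
      have h1 : (0:ℝ) ≤ M n ω := hnn n ω
      have hax : 0 ≤ M n ω + 1 + ξ (n+1) ω := by rw [← hrec n ω]; exact hnn (n+1) ω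
      have hxb : |ξ (n+1) ω| ≤ 2 * Real.sqrt (M n ω + 1) :=
        (hbd n ω).trans (by
          have := Real.sqrt_le_sqrt (by linarith : M n ω ≤ M n ω + 1)
          linarith)
      have := hD (M n ω + 1) (ξ (n+1) ω) (by linarith) hxb hax
      have hrw : M (n+1) ω ^ (r+1) = (M n ω + 1 + ξ (n+1) ω) ^ (r+1) := by rw [hrec n ω]
      rw [hrw]
      simp only [Pi.add_apply, Pi.smul_apply, smul_eq_mul, hg1def, hhdef]
      nlinarith [this]
    have hg1meas : StronglyMeasurable[ℱ n] g1 :=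
      (hmeasMa n (r+1)).add ((hmeasMa n r).const_mul D)
    have hA : μ[(fun ω => M (n+1) ω ^ (r+1)) | ℱ n]
        ≤ᵐ[μ] μ[g1 + ((r:ℝ)+1) • h | ℱ n] :=
      condExp_mono (hint (n+1) (r+1)) (hg1int.add hsint) (Filter.Eventually.of_forall hptw)
    have hB : μ[g1 + ((r:ℝ)+1) • h | ℱ n] =ᵐ[μ] μ[g1 | ℱ n] + μ[((r:ℝ)+1) • h | ℱ n] :=
      condExp_add hg1int hsint _
    have hC : μ[((r:ℝ)+1) • h | ℱ n] =ᵐ[μ] ((r:ℝ)+1) • μ[h | ℱ n] :=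
      condExp_smul _ _ _
    have hDm : μ[g1 | ℱ n] = g1 :=
      condExp_of_stronglyMeasurable (ℱ.le n) hg1meas hg1int
    have hE : μ[h | ℱ n] =ᵐ[μ] (fun ω => (M n ω + 1) ^ r) * μ[ξ (n+1) | ℱ n] :=
      condExp_mul_of_stronglyMeasurable_left (hmeasMa n r) hhint (hξint (n+1))
    filter_upwards [hA, hB, hC, hE, hcond n] with ω hA hB hC hE hF
    have h2 : (0:ℝ) ≤ (M n ω + 1) ^ r := pow_nonneg (by linarith [hnn n ω]) r
    have h3 := succ_pow_le r (M n ω) (hnn n ω)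
    rw [hB, hDm] at hA
    simp only [Pi.add_apply, Pi.smul_apply, smul_eq_mul, Pi.mul_apply] at hA hC hE ⊢
    rw [hC, hE] at hA
    have hF' : (M n ω + 1) ^ r * (μ[ξ (n+1) | ℱ n]) ω ≤ 0 :=
      mul_nonpos_of_nonneg_of_nonpos h2 hF
    have hg1v : g1 ω = (M n ω + 1) ^ (r+1) + D * (M n ω + 1) ^ r := rfl
    rw [hg1v] at hA
    have hr0 : (0:ℝ) ≤ (r:ℝ) + 1 := by positivity
    nlinarith [mul_nonpos_of_nonneg_of_nonpos hr0 hF']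
  -- first moment bound
  have hintM : ∀ n, Integrable (M n) μ := by
    intro n; have := hint n 1; simpa [pow_one] using this
  have hEM1 : ∀ n : ℕ, ∫ ω, M n ω ∂μ ≤ (n:ℝ) := by
    intro n
    induction n with
    | zero => simp only [h0]; simp
    | succ n ihn =>
      have hι : ∫ ω, ξ (n+1) ω ∂μ ≤ 0 := by
        rw [show ∫ ω, ξ (n+1) ω ∂μ = ∫ ω, (μ[ξ (n+1) | ℱ n]) ω ∂μ from
          (integral_condExp (ℱ.le n)).symm]
        exact integral_nonpos_of_ae (hcond n)
      have hcalc : ∫ ω, M (n+1) ω ∂μ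
          = (∫ ω, M n ω ∂μ) + 1 + ∫ ω, ξ (n+1) ω ∂μ := by
        calc ∫ ω, M (n+1) ω ∂μ = ∫ ω, (M n ω + 1 + ξ (n+1) ω) ∂μ := by
              simp only [hrec]
          _ = (∫ ω, (M n ω + 1) ∂μ) + ∫ ω, ξ (n+1) ω ∂μ :=
              integral_add ((hintM n).add (integrable_const 1)) (hξint (n+1))
          _ = (∫ ω, M n ω ∂μ) + 1 + ∫ ω, ξ (n+1) ω ∂μ := by
              rw [integral_add (hintM n) (integrable_const 1)]; simp
      rw [hcalc]; push_cast; linarith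
  -- higher moment bounds
  have hmom : ∀ r : ℕ, 1 ≤ r → ∃ C' : ℝ, 0 ≤ C' ∧
      ∀ n : ℕ, ∫ ω, M n ω ^ r ∂μ ≤ C' * (n:ℝ) ^ r := by
    intro r hr
    induction r with
    | zero => omega
    | succ r ihr =>
      by_cases hr0 : r = 0
      · subst hr0
        refine ⟨1, zero_le_one, fun n => ?_⟩
        simpa [pow_one] using hEM1 n
      · obtain ⟨C', hC'0, hC'⟩ := ihr (Nat.one_le_iff_ne_zero.mpr hr0)
        obtain ⟨C, hC0, hCdrift⟩ := drift r
        refine ⟨C * 2 ^ r * (C' + 1), by positivity, fun n => ?_⟩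
        induction n with
        | zero => simp [h0]
        | succ n ihn =>
          have key1 : ∫ ω, M (n+1) ω ^ (r+1) ∂μ
              ≤ ∫ ω, (M n ω ^ (r+1) + C * (M n ω + 1) ^ r) ∂μ := by
            rw [show ∫ ω, M (n+1) ω ^ (r+1) ∂μ
                = ∫ ω, (μ[(fun ω => M (n+1) ω ^ (r+1)) | ℱ n]) ω ∂μ from
              (integral_condExp (ℱ.le n)).symm]
            exact integral_mono_ae integrable_condExp
              ((hint n (r+1)).add ((hint1 n r).const_mul C)) (hCdrift n)
          have key2 : ∫ ω, (M n ω ^ (r+1) + C * (M n ω + 1) ^ r) ∂μ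
              = (∫ ω, M n ω ^ (r+1) ∂μ) + C * ∫ ω, (M n ω + 1) ^ r ∂μ := by
            rw [integral_add (hint n (r+1)) ((hint1 n r).const_mul C), integral_const_mul]
          have key3 : ∫ ω, (M n ω + 1) ^ r ∂μ ≤ 2 ^ r * (C' * (n:ℝ) ^ r + 1) := by
            have hmono : ∫ ω, (M n ω + 1) ^ r ∂μ ≤ ∫ ω, (2 ^ r * (M n ω ^ r + 1)) ∂μ :=
              integral_mono (hint1 n r) (((hint n r).add (integrable_const 1)).const_mul _)
                (fun ω => pow_add_one_le r (M n ω) (hnn n ω))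
            have heq : ∫ ω, (2 ^ r * (M n ω ^ r + 1)) ∂μ
                = 2 ^ r * ((∫ ω, M n ω ^ r ∂μ) + 1) := by
              rw [integral_const_mul, integral_add (hint n r) (integrable_const 1)]; simp
            rw [heq] at hmono
            have := hC' n
            have h2r : (0:ℝ) ≤ 2 ^ r := by positivity
            nlinarith
          -- combine
          have hN0 : (0:ℝ) ≤ (n:ℝ) := Nat.cast_nonneg n
          have hp1 : ((n:ℝ)) ^ r ≤ ((n:ℝ) + 1) ^ r := pow_le_pow_left₀ hN0 (by linarith) r
          have hp2 : (1:ℝ) ≤ ((n:ℝ) + 1) ^ r := one_le_pow₀ (by linarith)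
          have hintMn : ∫ ω, M (n+1) ω ^ (r+1) ∂μ
              ≤ (∫ ω, M n ω ^ (r+1) ∂μ) + C * (2 ^ r * (C' * (n:ℝ) ^ r + 1)) := by
            rw [key2] at key1
            have := mul_le_mul_of_nonneg_left key3 hC0
            linarith
          have h2r : (0:ℝ) ≤ 2 ^ r := by positivity
          have e1 : ((n:ℝ) + 1) ^ (r+1) = ((n:ℝ) + 1) ^ r * ((n:ℝ) + 1) := pow_succ _ _
          have e2 : ((n:ℝ)) ^ (r+1) = ((n:ℝ)) ^ r * (n:ℝ) := pow_succ _ _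
          have hK0 : (0:ℝ) ≤ C * 2 ^ r * (C' + 1) :=
            mul_nonneg (mul_nonneg hC0 h2r) (by linarith)
          push_cast
          nlinarith [ihn, hintMn, e1, e2,
            mul_le_mul_of_nonneg_left hp1 (mul_nonneg hK0 hN0),
            mul_le_mul_of_nonneg_left hp1 (mul_nonneg (mul_nonneg hC0 h2r) hC'0),
            mul_le_mul_of_nonneg_left hp2 (mul_nonneg hC0 h2r)]
  intro r hr
  obtain ⟨C, _, hC⟩ := drift r
  obtain ⟨C', _, hC'⟩ := hmom r hr
  exact ⟨⟨C, hC⟩, ⟨C', hC'⟩⟩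
end
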